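/- Let r ≥ 2 and k ≥ 0 be integers. Every element of L_r(A_n) that is homogeneous of total degree r + k with respect to the standard grading of A_n (each generator x_i having degree 1) lies in the K-linear span of products g_1·g_2···g_{k+1} of exactly k+1 elements g_1, …, g_{k+1} of the Lie subalgebra of A_n generated by the generators x_1, …, x_n. -/

import Mathlib

/-- Lower central series of an associative unital algebra `R` over `K`, as `K`-submodules:
`lowerCentral K R 1 = ⊤` and, for `i ≥ 1`, `lowerCentral K R (i+1)` is the `K`-linear span of
the brackets `⁅a, l⁆ = a * l - l * a` with `a : R` and `l ∈ lowerCentral K R i`.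
(By convention `lowerCentral K R 0 = ⊤` as well; only indices `i ≥ 1` are used.) -/
def lowerCentral (K : Type*) [CommRing K] (R : Type*) [Ring R] [Algebra K R] : ℕ → Submodule K R
  | 0 => ⊤
  | 1 => ⊤
  | n + 2 => Submodule.span K
      {x : R | ∃ a : R, ∃ l ∈ lowerCentral K R (n + 1), x = a * l - l * a}

/-- `lcsIdeal K R i` is the two-sided ideal `M_i(R)` of `R` generated by `lowerCentral K R i`,
realized as the `K`-submodule spanned by all products `a * l * b` with `a b : R` and
`l ∈ lowerCentral K R i`.  Products of such ideals are taken using the multiplication of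
`Submodule K R` (the span of pairwise products), which agrees with the product of
two-sided ideals. -/
def lcsIdeal (K : Type*) [CommRing K] (R : Type*) [Ring R] [Algebra K R] (i : ℕ) : Submodule K R :=
  Submodule.span K {x : R | ∃ a b : R, ∃ l ∈ lowerCentral K R i, x = a * l * b}

attribute [local instance 100] LieRing.ofAssociativeRing

section Aux

variable (K : Type*) [Field K] (n : ℕ)

local notation "A" => FreeAlgebra K (Fin n)

/-- monomial attached to a word -/
noncomputable def myMono (w : List (Fin n)) : A := (w.map (FreeAlgebra.ι K)).prod

/-- Lie span of the generators -/
noncomputable def myLS : LieSubalgebra K A :=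
  LieSubalgebra.lieSpan K A (Set.range (FreeAlgebra.ι K (X := Fin n)))

/-- span of products of j Lie elements (list form) -/
noncomputable def myPL (j : ℕ) : Submodule K A :=
  Submodule.span K {y : A | ∃ L : List A, L.length = j ∧ (∀ a ∈ L, a ∈ myLS K n) ∧ y = L.prod}

theorem prod_mem_myPL (L : List A) (h : ∀ a ∈ L, a ∈ myLS K n) :
    L.prod ∈ myPL K n L.length :=
  Submodule.subset_span ⟨L, rfl, h, rfl⟩

theorem mul_myPL_left {x : A} (hx : x ∈ myLS K n) {j : ℕ} {y : A} (hy : y ∈ myPL K n j) :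
    x * y ∈ myPL K n (j + 1) := by
  have : myPL K n j ≤ (myPL K n (j + 1)).comap (LinearMap.mulLeft K x) := by
    rw [myPL, Submodule.span_le]
    rintro _ ⟨L, rfl, hL, rfl⟩
    have : x * L.prod ∈ myPL K n (L.length + 1) :=
      Submodule.subset_span ⟨x :: L, by simp, by simpa using ⟨hx, hL⟩, by simp⟩
    simpa using this
  exact this hy

theorem mul_myPL_right {x : A} (hx : x ∈ myLS K n) {j : ℕ} {y : A} (hy : y ∈ myPL K n j) :
    y * x ∈ myPL K n (j + 1) := by
  have : myPL K n j ≤ (myPL K n (j + 1)).comap (LinearMap.mulRight K x) := by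
    rw [myPL, Submodule.span_le]
    rintro _ ⟨L, rfl, hL, rfl⟩
    have : L.prod * x ∈ myPL K n (L.length + 1) :=
      Submodule.subset_span ⟨L ++ [x], by simp, by
        intro a ha
        rcases List.mem_append.mp ha with h | h
        · exact hL a h
        · simpa using (List.mem_singleton.mp h) ▸ hx, by simp⟩
    simpa using this
  exact this hy

theorem iota_mem_myLS (i : Fin n) : FreeAlgebra.ι K i ∈ myLS K n :=
  LieSubalgebra.subset_lieSpan ⟨i, rfl⟩

theorem bracket_list_prod {x : A} (hx : x ∈ myLS K n) :
    ∀ L : List A, (∀ a ∈ L, a ∈ myLS K n) → ⁅x, L.prod⁆ ∈ myPL K n L.length := by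
  intro L
  induction L with
  | nil => intro _; simp [Ring.lie_def]
  | cons a t ih =>
    intro hL
    have ha : a ∈ myLS K n := hL a (List.mem_cons_self)
    have ht : ∀ b ∈ t, b ∈ myLS K n := fun b hb => hL b (List.mem_cons_of_mem a hb)
    have key : ⁅x, (a :: t).prod⁆ = ⁅x, a⁆ * t.prod + a * ⁅x, t.prod⁆ := by
      simp only [List.prod_cons, Ring.lie_def]
      noncomm_ring
    rw [key]
    refine add_mem ?_ ?_
    · have : ((⁅x, a⁆ :: t).prod) ∈ myPL K n (t.length + 1) := by
        have := prod_mem_myPL K n (⁅x, a⁆ :: t) (by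
          intro b hb
          rcases List.mem_cons.mp hb with h | h
          · exact h ▸ (myLS K n).lie_mem hx ha
          · exact ht b h)
        simpa using this
      simpa [List.prod_cons] using this
    · simpa using mul_myPL_left K n ha (ih ht)

theorem bracket_myLS_myPL {x : A} (hx : x ∈ myLS K n) {j : ℕ} {y : A}
    (hy : y ∈ myPL K n j) : ⁅x, y⁆ ∈ myPL K n j := by
  have : myPL K n j ≤ (myPL K n j).comap (LinearMap.mulLeft K x - LinearMap.mulRight K x) := by
    rw [myPL, Submodule.span_le]
    rintro _ ⟨L, rfl, hL, rfl⟩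
    have := bracket_list_prod K n hx L hL
    simpa [Ring.lie_def, myPL] using this
  have h := this hy
  simpa [Ring.lie_def] using h

theorem mul_mono_right : ∀ (v : List (Fin n)) {j : ℕ} {y : A}, y ∈ myPL K n j →
    y * myMono K n v ∈ myPL K n (j + v.length) := by
  intro v
  induction v with
  | nil => intro j y hy; simpa [myMono] using hy
  | cons i t ih =>
    intro j y hy
    have h1 : y * FreeAlgebra.ι K i ∈ myPL K n (j + 1) :=
      mul_myPL_right K n (iota_mem_myLS K n i) hy
    have h2 := ih h1
    have : y * myMono K n (i :: t) = y * FreeAlgebra.ι K i * myMono K n t := by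
      simp [myMono, mul_assoc]
    rw [this]
    have harith : j + 1 + t.length = j + (i :: t).length := by simp; omega
    rw [← harith]
    exact h2

theorem word_bracket : ∀ (w : List (Fin n)) (i : Fin n) {j : ℕ} {y : A}, y ∈ myPL K n j →
    ⁅myMono K n (i :: w), y⁆ ∈ myPL K n (j + w.length) := by
  intro w
  induction w with
  | nil =>
    intro i j y hy
    have : myMono K n [i] = FreeAlgebra.ι K i := by simp [myMono]
    rw [this]
    simpa using bracket_myLS_myPL K n (iota_mem_myLS K n i) hy
  | cons i' t ih =>
    intro i j y hy
    have hsplit : myMono K n (i :: i' :: t) = FreeAlgebra.ι K i * myMono K n (i' :: t) := by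
      simp [myMono]
    have key : ⁅FreeAlgebra.ι K i * myMono K n (i' :: t), y⁆ =
        FreeAlgebra.ι K i * ⁅myMono K n (i' :: t), y⁆ + ⁅FreeAlgebra.ι K i, y⁆ * myMono K n (i' :: t) := by
      simp only [Ring.lie_def]
      noncomm_ring
    rw [hsplit, key]
    refine add_mem ?_ ?_
    · have := mul_myPL_left K n (iota_mem_myLS K n i) (ih i' hy)
      have harith : j + t.length + 1 = j + (i' :: t).length := by simp; omega
      rw [← harith]
      exact this
    · have h1 : ⁅FreeAlgebra.ι K i, y⁆ ∈ myPL K n j :=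
        bracket_myLS_myPL K n (iota_mem_myLS K n i) hy
      have := mul_mono_right K n (i' :: t) h1
      exact this

/-- iterated bracket of monomials -/
noncomputable def myIB : List (List (Fin n)) → A
  | [] => 1
  | [w] => myMono K n w
  | w :: ws@(_ :: _) => ⁅myMono K n w, myIB ws⁆

@[simp] theorem myIB_single (w : List (Fin n)) : myIB K n [w] = myMono K n w := by
  simp [myIB]

theorem myIB_cons (w : List (Fin n)) (ws : List (List (Fin n))) (h : ws ≠ []) :
    myIB K n (w :: ws) = ⁅myMono K n w, myIB K n ws⁆ := by
  match ws, h with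
  | a :: t, _ => simp [myIB]

theorem mono_mem_myPL (w : List (Fin n)) : myMono K n w ∈ myPL K n w.length := by
  have := prod_mem_myPL K n (w.map (FreeAlgebra.ι K)) (by
    intro a ha
    rcases List.mem_map.mp ha with ⟨i, _, rfl⟩
    exact iota_mem_myLS K n i)
  simpa [myMono] using this

theorem myIB_mem_myPL : ∀ ws : List (List (Fin n)), ws ≠ [] → (∀ w ∈ ws, w ≠ []) →
    myIB K n ws ∈ myPL K n ((ws.map fun w => w.length - 1).sum + 1) := by
  intro ws
  induction ws with
  | nil => intro h; exact absurd rfl h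
  | cons w ws ih =>
    intro _ hall
    rcases List.exists_cons_of_ne_nil (hall w (List.mem_cons_self)) with ⟨i, w', rfl⟩
    cases ws with
    | nil =>
      simp only [myIB_single]
      have := mono_mem_myPL K n (i :: w')
      simpa using this
    | cons a t =>
      rw [myIB_cons K n _ _ (by simp)]
      have hih := ih (by simp) (fun v hv => hall v (List.mem_cons_of_mem _ hv))
      have := word_bracket K n w' i hih
      have harith : (((i :: w') :: a :: t).map fun w => w.length - 1).sum + 1 =
          (((a :: t).map fun w => w.length - 1).sum + 1) + w'.length := by
        simp [List.map_cons, List.sum_cons]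
        omega
      rw [harith]
      exact this

theorem myIB_zero : ∀ ws : List (List (Fin n)), 2 ≤ ws.length →
    (∃ w ∈ ws, w = []) → myIB K n ws = 0 := by
  intro ws
  induction ws with
  | nil => intro h; simp at h
  | cons w ws ih =>
    intro hlen hex
    have hws : ws ≠ [] := by
      intro h; subst h; simp at hlen
    rw [myIB_cons K n _ _ hws]
    rcases hex with ⟨v, hv, hvnil⟩
    rcases List.mem_cons.mp hv with h | h
    · have hw : w = [] := h ▸ hvnil
      rw [hw]
      simp [Ring.lie_def, myMono]
    · -- empty word inside ws
      cases ws with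
      | nil => exact absurd rfl hws
      | cons a t =>
        cases t with
        | nil =>
          -- ws = [a], a = v = []
          have hva : v = a := by simpa using h
          rw [← hva, hvnil]
          simp [Ring.lie_def, myMono]
        | cons b t' =>
          have := ih (by simp only [List.length_cons]; omega) ⟨v, h, hvnil⟩
          rw [this]
          simp

/-- span of monomials of length exactly d -/
noncomputable def myMdeg (d : ℕ) : Submodule K A :=
  Submodule.span K {y : A | ∃ w : List (Fin n), w.length = d ∧ y = myMono K n w}

theorem mono_mul_mono (w v : List (Fin n)) :
    myMono K n w * myMono K n v = myMono K n (w ++ v) := by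
  simp [myMono]

theorem myMdeg_mul {a b : ℕ} {x y : A} (hx : x ∈ myMdeg K n a) (hy : y ∈ myMdeg K n b) :
    x * y ∈ myMdeg K n (a + b) := by
  have hle : myMdeg K n a * myMdeg K n b ≤ myMdeg K n (a + b) := by
    rw [myMdeg, myMdeg, Submodule.span_mul_span]
    apply Submodule.span_le.mpr
    rintro _ ⟨_, ⟨w, hw, rfl⟩, _, ⟨v, hv, rfl⟩, rfl⟩
    exact Submodule.subset_span ⟨w ++ v, by simp [hw, hv], (mono_mul_mono K n w v)⟩
  exact hle (Submodule.mul_mem_mul hx hy)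

theorem mono_mem_myMdeg (w : List (Fin n)) : myMono K n w ∈ myMdeg K n w.length :=
  Submodule.subset_span ⟨w, rfl, rfl⟩

theorem myIB_homog : ∀ ws : List (List (Fin n)), ws ≠ [] →
    myIB K n ws ∈ myMdeg K n ((ws.map List.length).sum) := by
  intro ws
  induction ws with
  | nil => intro h; exact absurd rfl h
  | cons w ws ih =>
    intro _
    cases ws with
    | nil => simpa using mono_mem_myMdeg K n w
    | cons a t =>
      rw [myIB_cons K n _ _ (by simp), Ring.lie_def]
      have h1 := myMdeg_mul K n (mono_mem_myMdeg K n w) (ih (by simp))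
      have h2 := myMdeg_mul K n (ih (by simp)) (mono_mem_myMdeg K n w)
      have harith : ((a :: t).map List.length).sum + w.length =
          w.length + ((a :: t).map List.length).sum := by omega
      rw [harith] at h2
      have := sub_mem h1 h2
      simpa using this

theorem pow_le_myMdeg : ∀ d : ℕ,
    (Submodule.span K (Set.range (FreeAlgebra.ι K (X := Fin n)))) ^ d ≤ myMdeg K n d := by
  intro d
  induction d with
  | zero =>
    rw [pow_zero]
    rw [Submodule.one_eq_span]
    apply Submodule.span_le.mpr
    rintro _ ⟨rfl⟩
    exact Submodule.subset_span ⟨[], rfl, by simp [myMono]⟩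
  | succ d ih =>
    rw [pow_succ]
    have : (Submodule.span K (Set.range (FreeAlgebra.ι K (X := Fin n)))) ≤ myMdeg K n 1 := by
      apply Submodule.span_le.mpr
      rintro _ ⟨i, rfl⟩
      exact Submodule.subset_span ⟨[i], rfl, by simp [myMono]⟩
    calc (Submodule.span K (Set.range (FreeAlgebra.ι K (X := Fin n)))) ^ d *
          (Submodule.span K (Set.range (FreeAlgebra.ι K (X := Fin n))))
        ≤ myMdeg K n d * myMdeg K n 1 := mul_le_mul' ih this
      _ ≤ myMdeg K n (d + 1) := by
          rw [myMdeg, myMdeg, Submodule.span_mul_span]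
          apply Submodule.span_le.mpr
          rintro _ ⟨_, ⟨w, hw, rfl⟩, _, ⟨v, hv, rfl⟩, rfl⟩
          exact Submodule.subset_span ⟨w ++ v, by simp [hw, hv], (mono_mul_mono K n w v)⟩

noncomputable def myFilter (d : ℕ) :
    MonoidAlgebra K (FreeMonoid (Fin n)) →ₗ[K] MonoidAlgebra K (FreeMonoid (Fin n)) where
  toFun := fun a => MonoidAlgebra.ofCoeff
    (Finsupp.filter (fun x : FreeMonoid (Fin n) => x.length = d) a.coeff)
  map_add' := fun a b => by
    simp only [MonoidAlgebra.coeff_add, Finsupp.filter_add, MonoidAlgebra.ofCoeff_add]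
  map_smul' := fun c a => by
    simp only [MonoidAlgebra.coeff_smul, Finsupp.filter_smul, MonoidAlgebra.ofCoeff_smul,
      RingHom.id_apply]

noncomputable def myProj (d : ℕ) : A →ₗ[K] A :=
  ((FreeAlgebra.equivMonoidAlgebraFreeMonoid (R := K) (X := Fin n)).symm.toLinearMap).comp
    ((myFilter K n d).comp
      ((FreeAlgebra.equivMonoidAlgebraFreeMonoid (R := K) (X := Fin n)).toLinearMap))

theorem equiv_mono (w : List (Fin n)) :
    FreeAlgebra.equivMonoidAlgebraFreeMonoid (R := K) (X := Fin n) (myMono K n w) =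
      MonoidAlgebra.single (FreeMonoid.ofList w) 1 := by
  induction w with
  | nil =>
    simp [myMono, FreeMonoid.ofList_nil, MonoidAlgebra.one_def]
  | cons i t ih =>
    have : myMono K n (i :: t) = FreeAlgebra.ι K i * myMono K n t := by simp [myMono]
    rw [this, map_mul, ih]
    have hι : FreeAlgebra.equivMonoidAlgebraFreeMonoid (R := K) (X := Fin n)
        (FreeAlgebra.ι K i) = MonoidAlgebra.single (FreeMonoid.of i) 1 := by
      simp [FreeAlgebra.equivMonoidAlgebraFreeMonoid, MonoidAlgebra.of_apply]
    rw [hι, MonoidAlgebra.single_mul_single, FreeMonoid.ofList_cons]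
    simp

theorem myProj_mono (d : ℕ) (w : List (Fin n)) :
    myProj K n d (myMono K n w) = if w.length = d then myMono K n w else 0 := by
  have hlen : (FreeMonoid.ofList w).length = w.length := rfl
  by_cases h : w.length = d
  · rw [if_pos h]
    have : myFilter K n d (MonoidAlgebra.single (FreeMonoid.ofList w) 1) =
        MonoidAlgebra.single (FreeMonoid.ofList w) 1 := by
      show MonoidAlgebra.ofCoeff (Finsupp.filter _ (Finsupp.single _ _)) =
        MonoidAlgebra.ofCoeff (Finsupp.single _ _)
      rw [Finsupp.filter_single_of_pos]
      simpa [hlen] using h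
    simp only [myProj, LinearMap.comp_apply, AlgEquiv.toLinearMap_apply, equiv_mono, this]
    have := equiv_mono K n w
    rw [← this]
    simp
  · rw [if_neg h]
    have : myFilter K n d (MonoidAlgebra.single (FreeMonoid.ofList w) 1) = 0 := by
      show MonoidAlgebra.ofCoeff (Finsupp.filter _ (Finsupp.single _ _)) =
        MonoidAlgebra.ofCoeff 0
      rw [Finsupp.filter_single_of_neg]
      simpa [hlen] using h
    simp only [myProj, LinearMap.comp_apply, AlgEquiv.toLinearMap_apply, equiv_mono, this]
    simp

theorem myProj_fix {d : ℕ} {m : A} (hm : m ∈ myMdeg K n d) : myProj K n d m = m := by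
  have hle : myMdeg K n d ≤ LinearMap.ker (myProj K n d - LinearMap.id) := by
    apply Submodule.span_le.mpr
    rintro _ ⟨w, hw, rfl⟩
    simp [LinearMap.mem_ker, myProj_mono, hw]
  have := hle hm
  simpa [LinearMap.mem_ker, sub_eq_zero] using this

theorem myProj_kill {d d' : ℕ} (hne : d' ≠ d) {m : A} (hm : m ∈ myMdeg K n d') :
    myProj K n d m = 0 := by
  have hle : myMdeg K n d' ≤ LinearMap.ker (myProj K n d) := by
    apply Submodule.span_le.mpr
    rintro _ ⟨w, hw, rfl⟩
    simp [LinearMap.mem_ker, myProj_mono, hw, hne]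
  simpa [LinearMap.mem_ker] using hle hm

theorem mem_span_mono (m : A) :
    m ∈ Submodule.span K {y : A | ∃ w : List (Fin n), y = myMono K n w} := by
  have h1 : m ∈ Subalgebra.toSubmodule (Algebra.adjoin K
      (Set.range (FreeAlgebra.ι K (X := Fin n)))) := by
    rw [FreeAlgebra.adjoin_range_ι]; trivial
  rw [Algebra.adjoin_eq_span] at h1
  have hsub : (Submonoid.closure (Set.range (FreeAlgebra.ι K (X := Fin n))) : Set A) ⊆
      ↑(Submodule.span K {y : A | ∃ w : List (Fin n), y = myMono K n w}) := by
    intro x hx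
    obtain ⟨l, hl, rfl⟩ := Submonoid.exists_list_of_mem_closure hx
    suffices h : ∃ w : List (Fin n), l.prod = myMono K n w by
      obtain ⟨w, hw⟩ := h
      exact Submodule.subset_span ⟨w, hw⟩
    clear hx
    induction l with
    | nil => exact ⟨[], by simp [myMono]⟩
    | cons a t ih =>
      obtain ⟨w, hw⟩ := ih (fun y hy => hl y (List.mem_cons_of_mem _ hy))
      obtain ⟨i, rfl⟩ := hl a (List.mem_cons_self)
      exact ⟨i :: w, by simp [hw, myMono]⟩
  exact Submodule.span_le.mpr (fun x hx => hsub hx) h1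

theorem lc_le_span_ib : ∀ r : ℕ, 1 ≤ r →
    lowerCentral K (FreeAlgebra K (Fin n)) r ≤
      Submodule.span K {y : A | ∃ ws : List (List (Fin n)), ws.length = r ∧ y = myIB K n ws} := by
  intro r
  induction r with
  | zero => intro h; omega
  | succ r ih =>
    intro _
    cases r with
    | zero =>
      intro m _
      have := mem_span_mono K n m
      refine Submodule.span_le.mpr ?_ this
      rintro _ ⟨w, rfl⟩
      exact Submodule.subset_span ⟨[w], rfl, (myIB_single K n w).symm⟩
    | succ r' =>
      show lowerCentral K (FreeAlgebra K (Fin n)) (r' + 2) ≤ _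
      rw [lowerCentral]
      apply Submodule.span_le.mpr
      rintro _ ⟨a, l, hl, rfl⟩
      have hstepB : Submodule.span K
          {y : A | ∃ ws : List (List (Fin n)), ws.length = r' + 1 ∧ y = myIB K n ws} ≤
          Submodule.comap (LinearMap.mulLeft K a - LinearMap.mulRight K a)
            (Submodule.span K {y : A | ∃ ws : List (List (Fin n)),
              ws.length = r' + 2 ∧ y = myIB K n ws}) := by
        apply Submodule.span_le.mpr
        rintro _ ⟨ws, hlen, rfl⟩
        have hws : ws ≠ [] := by intro h; rw [h] at hlen; simp at hlen
        -- now vary a over monomials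
        have hstepC : Submodule.span K {y : A | ∃ w : List (Fin n), y = myMono K n w} ≤
            Submodule.comap (LinearMap.mulRight K (myIB K n ws) -
                LinearMap.mulLeft K (myIB K n ws))
              (Submodule.span K {y : A | ∃ ws' : List (List (Fin n)),
                ws'.length = r' + 2 ∧ y = myIB K n ws'}) := by
          apply Submodule.span_le.mpr
          rintro _ ⟨w, rfl⟩
          rw [SetLike.mem_coe, Submodule.mem_comap, LinearMap.sub_apply, LinearMap.mulRight_apply,
            LinearMap.mulLeft_apply]
          have : myMono K n w * myIB K n ws - myIB K n ws * myMono K n w =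
              myIB K n (w :: ws) := by
            rw [myIB_cons K n w ws hws, Ring.lie_def]
          rw [this]
          exact Submodule.subset_span ⟨w :: ws, by simp [hlen], rfl⟩
        have := hstepC (mem_span_mono K n a)
        simpa using this
      have hA := ih (by omega) hl
      have := hstepB hA
      simpa using this

theorem sum_pred (ws : List (List (Fin n))) (h : ∀ w ∈ ws, w ≠ []) :
    (ws.map fun w => w.length - 1).sum + ws.length = (ws.map List.length).sum := by
  induction ws with
  | nil => simp
  | cons w t ih =>
    have h1 : 0 < w.length := List.length_pos_iff.mpr (h w (List.mem_cons_self))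
    have h2 := ih (fun v hv => h v (List.mem_cons_of_mem _ hv))
    simp only [List.map_cons, List.sum_cons, List.length_cons]
    omega

theorem list_to_fin (j : ℕ) (L : List A) (hlen : L.length = j) (h : ∀ a ∈ L, a ∈ myLS K n) :
    L.prod ∈ Submodule.span K {y : A |
      ∃ g : Fin j → A,
        (∀ p, g p ∈ LieSubalgebra.lieSpan K (FreeAlgebra K (Fin n))
            (Set.range (FreeAlgebra.ι K (X := Fin n)))) ∧
        y = (List.ofFn g).prod} := by
  subst hlen
  exact Submodule.subset_span ⟨L.get, fun p => h _ (L.get_mem p),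
    by rw [List.ofFn_get]⟩

end Aux


/-- the PBW argument / Lemma 2.1: for `r ≥ 2` and `k ≥ 0`, every element of
`L_r(A_n)` that is homogeneous of total degree `r + k` (i.e. lies in the `(r+k)`-th power of
the span of the generators, the degree-`(r+k)` homogeneous component of the standard
grading of `A_n`) lies in the `K`-span of products `g_1 ⋯ g_{k+1}` of exactly `k + 1`
elements of the Lie subalgebra of `A_n` generated by the generators. -/
theorem pbw_degree_of_lower_central
    (K : Type*) [Field K] [CharZero K]
    (n : ℕ) (r k : ℕ) (hr : 2 ≤ r)
    (m : FreeAlgebra K (Fin n))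
    (hm : m ∈ lowerCentral K (FreeAlgebra K (Fin n)) r)
    (hdeg : m ∈ (Submodule.span K (Set.range (FreeAlgebra.ι K (X := Fin n)))) ^ (r + k)) :
    m ∈ Submodule.span K {y : FreeAlgebra K (Fin n) |
        ∃ g : Fin (k + 1) → FreeAlgebra K (Fin n),
          (∀ p, g p ∈ LieSubalgebra.lieSpan K (FreeAlgebra K (Fin n))
              (Set.range (FreeAlgebra.ι K (X := Fin n)))) ∧
          y = (List.ofFn g).prod} := by
  have h2 : m ∈ myMdeg K n (r + k) := pow_le_myMdeg K n (r + k) hdeg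
  have hpi : myProj K n (r + k) m = m := myProj_fix K n h2
  have h1 : m ∈ Submodule.span K {y : FreeAlgebra K (Fin n) |
      ∃ ws : List (List (Fin n)), ws.length = r ∧ y = myIB K n ws} :=
    lc_le_span_ib K n r (by omega) hm
  have hmap : m ∈ Submodule.map (myProj K n (r + k)) (Submodule.span K
      {y : FreeAlgebra K (Fin n) | ∃ ws : List (List (Fin n)), ws.length = r ∧ y = myIB K n ws}) :=
    ⟨m, h1, hpi⟩
  rw [Submodule.map_span] at hmap
  have hT : Submodule.span K ((myProj K n (r + k)) ''
      {y : FreeAlgebra K (Fin n) | ∃ ws : List (List (Fin n)), ws.length = r ∧ y = myIB K n ws}) ≤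
      myPL K n (k + 1) := by
    apply Submodule.span_le.mpr
    rintro _ ⟨_, ⟨ws, hlen, rfl⟩, rfl⟩
    have hws : ws ≠ [] := by
      intro h; rw [h] at hlen; simp at hlen; omega
    by_cases hall : ∀ w ∈ ws, w ≠ []
    · by_cases hd : (ws.map List.length).sum = r + k
      · rw [myProj_fix K n (hd ▸ myIB_homog K n ws hws)]
        have hmem := myIB_mem_myPL K n ws hws hall
        have hsp := sum_pred n ws hall
        have harr : (ws.map fun w => w.length - 1).sum = k := by omega
        rw [harr] at hmem
        exact hmem
      · rw [myProj_kill K n hd (myIB_homog K n ws hws)]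
        exact zero_mem _
    · push_neg at hall
      have hz : myIB K n ws = 0 := myIB_zero K n ws (by omega) hall
      rw [hz, map_zero]
      exact zero_mem _
  have hPL : m ∈ myPL K n (k + 1) := hT hmap
  refine Submodule.span_le.mpr ?_ hPL
  rintro _ ⟨L, hlen, hLS, rfl⟩
  exact list_to_fin K n (k + 1) L hlen hLS
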